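/- For every positive integer N there exists a claw-free graph G on n ≥ N vertices with no isolated vertices such that every CFON coloring of G uses at least log₂((1 + √(1+8n))/2) colors; in particular, the CFON chromatic number of claw-free graphs is Ω(log n). -/

import Mathlib

namespace CFONAux

abbrev V (m : ℕ) := {p : Fin m × Fin m // p.1 < p.2}

def touch {m : ℕ} (x : Fin m) (v : V m) : Prop := v.1.1 = x ∨ v.1.2 = x

instance {m : ℕ} (x : Fin m) (v : V m) : Decidable (touch x v) := by
  unfold touch; infer_instance

def H (m : ℕ) : SimpleGraph (V m) where
  Adj u v := u ≠ v ∧ ∃ x, touch x u ∧ touch x v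
  symm := ⟨by rintro u v ⟨h, x, h1, h2⟩; exact ⟨h.symm, x, h2, h1⟩⟩
  loopless := ⟨fun v h => h.1 rfl⟩

lemma adj_of_touch {m : ℕ} {u v : V m} {x : Fin m} (h : u ≠ v)
    (h1 : touch x u) (h2 : touch x v) : (H m).Adj u v := ⟨h, x, h1, h2⟩

lemma touch_mk {m : ℕ} {i j x : Fin m} (h : i < j) :
    touch x ⟨(i, j), h⟩ ↔ x = i ∨ x = j := by
  unfold touch; simp [eq_comm]

/-- a vertex touched by both endpoints of `e0` is `e0`. -/
lemma eq_of_touch_touch {m : ℕ} {i j : Fin m} (hij : i < j) {v : V m}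
    (h1 : touch i v) (h2 : touch j v) : v = ⟨(i, j), hij⟩ := by
  obtain ⟨⟨a, b⟩, hab⟩ := v
  rcases h1 with h1 | h1 <;> rcases h2 with h2 | h2 <;>
    simp_all <;> first
    | (exfalso; simp_all; omega)
    | (exact Fin.lt_asymm hab |>.elim (by simp_all))

end CFONAux

namespace CFONAux

lemma clawfree {m : ℕ} {b s1 s2 s3 : V m}
    (h12 : s1 ≠ s2) (h13 : s1 ≠ s3) (h23 : s2 ≠ s3)
    (a1 : (H m).Adj b s1) (a2 : (H m).Adj b s2) (a3 : (H m).Adj b s3) :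
    (H m).Adj s1 s2 ∨ (H m).Adj s1 s3 ∨ (H m).Adj s2 s3 := by
  obtain ⟨-, x1, t1, u1⟩ := a1
  obtain ⟨-, x2, t2, u2⟩ := a2
  obtain ⟨-, x3, t3, u3⟩ := a3
  -- each xi is an endpoint of b
  have e1 : x1 = b.1.1 ∨ x1 = b.1.2 := by rcases t1 with h | h <;> [left; right] <;> omega
  have e2 : x2 = b.1.1 ∨ x2 = b.1.2 := by rcases t2 with h | h <;> [left; right] <;> omega
  have e3 : x3 = b.1.1 ∨ x3 = b.1.2 := by rcases t3 with h | h <;> [left; right] <;> omega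
  rcases e1 with e1 | e1 <;> rcases e2 with e2 | e2 <;> rcases e3 with e3 | e3
  · exact Or.inl (adj_of_touch h12 u1 (e1 ▸ e2 ▸ u2))
  · exact Or.inl (adj_of_touch h12 u1 (e1 ▸ e2 ▸ u2))
  · exact Or.inr (Or.inl (adj_of_touch h13 u1 (e1 ▸ e3 ▸ u3)))
  · exact Or.inr (Or.inr (adj_of_touch h23 u2 (e2 ▸ e3 ▸ u3)))
  · exact Or.inr (Or.inr (adj_of_touch h23 u2 (e2 ▸ e3 ▸ u3)))
  · exact Or.inr (Or.inl (adj_of_touch h13 u1 (e1 ▸ e3 ▸ u3)))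
  · exact Or.inl (adj_of_touch h12 u1 (e1 ▸ e2 ▸ u2))
  · exact Or.inl (adj_of_touch h12 u1 (e1 ▸ e2 ▸ u2))

end CFONAux

namespace CFONAux

variable {m k : ℕ} (c : V m → Fin k)

/-- parity vector of colors at a vertex `i` of `K_m`. -/
def f (i : Fin m) : Fin k → ZMod 2 := fun a =>
  ∑ v : V m, if touch i v ∧ c v = a then 1 else 0

lemma key {i j : Fin m} (hij : i < j) {a : Fin k}
    (hu : ∃! u : V m, (H m).Adj ⟨(i, j), hij⟩ u ∧ c u = a) :
    f c i a + f c j a = 1 := by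
  classical
  set e0 : V m := ⟨(i, j), hij⟩ with he0
  have hsum : f c i a + f c j a =
      ∑ v : V m, ((if touch i v ∧ c v = a then (1 : ZMod 2) else 0) +
        (if touch j v ∧ c v = a then 1 else 0)) := by
    rw [f, f, Finset.sum_add_distrib]
  rw [hsum]
  have hpt : ∀ v : V m,
      ((if touch i v ∧ c v = a then (1 : ZMod 2) else 0) +
        (if touch j v ∧ c v = a then 1 else 0)) =
      (if (H m).Adj e0 v ∧ c v = a then 1 else 0) := by
    intro v
    by_cases hv : v = e0
    · have hti : touch i v := by rw [hv]; exact Or.inl rfl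
      have htj : touch j v := by rw [hv]; exact Or.inr rfl
      have hna : ¬ (H m).Adj e0 v := by rw [hv]; exact (H m).loopless.irrefl e0
      by_cases hca : c v = a <;> simp [hti, htj, hca, hna] <;> decide
    · have hnb : ¬ (touch i v ∧ touch j v) := by
        rintro ⟨h1, h2⟩; exact hv (eq_of_touch_touch hij h1 h2)
      have hadj : (H m).Adj e0 v ↔ (touch i v ∨ touch j v) := by
        constructor
        · rintro ⟨-, x, tx, txv⟩
          rcases (touch_mk hij).mp tx with rfl | rfl
          · exact Or.inl txv
          · exact Or.inr txv
        · rintro (h | h)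
          · exact ⟨Ne.symm hv, i, Or.inl rfl, h⟩
          · exact ⟨Ne.symm hv, j, Or.inr rfl, h⟩
      by_cases h1 : touch i v <;> by_cases h2 : touch j v <;>
        by_cases hca : c v = a <;>
        simp [h1, h2, hca, hadj, hnb] at * <;> tauto
  rw [Finset.sum_congr rfl fun v _ => hpt v]
  rw [Finset.sum_boole]
  have : (Finset.univ.filter fun v : V m => (H m).Adj e0 v ∧ c v = a).card = 1 := by
    obtain ⟨u, hu1, hu2⟩ := hu
    rw [Finset.card_eq_one]
    exact ⟨u, by ext v; simp only [Finset.mem_filter, Finset.mem_univ, true_and,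
      Finset.mem_singleton]; exact ⟨fun h => hu2 v h, fun h => h ▸ hu1⟩⟩
  rw [this]; norm_num

lemma f_inj
    (hc : ∀ v : V m, ∃ a : Fin k, ∃! u : V m, (H m).Adj v u ∧ c u = a) :
    Function.Injective (f c) := by
  have main : ∀ i j : Fin m, i < j → f c i ≠ f c j := by
    intro i j hij heq
    obtain ⟨a, hu⟩ := hc ⟨(i, j), hij⟩
    have := key c hij hu
    rw [heq] at this
    have h0 : f c j a + f c j a = 0 := by
      have := ZMod.natCast_self 2
      ring_nf
      rw [show (2 : ZMod 2) = ((2 : ℕ) : ZMod 2) by norm_num, ZMod.natCast_self]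
      ring
    rw [h0] at this
    exact absurd this (by decide)
  intro i j heq
  by_contra hne
  rcases lt_or_gt_of_ne hne with h | h
  · exact main i j h heq
  · exact main j i h heq.symm

end CFONAux

namespace CFONAux

lemma card_V_le (m : ℕ) : Fintype.card (V m) ≤ m.choose 2 := by
  classical
  have : Function.Injective (fun v : V m =>
      (⟨s(v.1.1, v.1.2), by simp [Sym2.mk_isDiag_iff]; exact v.2.ne⟩ :
        {z : Sym2 (Fin m) // ¬ z.IsDiag})) := by
    rintro ⟨⟨a, b⟩, hab⟩ ⟨⟨a', b'⟩, hab'⟩ h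
    simp only [Subtype.mk.injEq, Sym2.eq_iff] at h
    rcases h with ⟨rfl, rfl⟩ | ⟨rfl, rfl⟩
    · rfl
    · exact absurd hab' (by simp at hab ⊢; omega)
  calc Fintype.card (V m) ≤ Fintype.card {z : Sym2 (Fin m) // ¬ z.IsDiag} :=
        Fintype.card_le_of_injective _ this
    _ = (Fintype.card (Fin m)).choose 2 := Sym2.card_subtype_not_diag
    _ = m.choose 2 := by simp

lemma le_card_V (N : ℕ) : N ≤ Fintype.card (V (N + 2)) := by
  classical
  have : Function.Injective (fun i : Fin N =>
      (⟨(⟨i, by omega⟩, ⟨i + 1, by omega⟩), by simp⟩ : V (N + 2))) := by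
    intro i j h
    simp only [Subtype.mk.injEq, Prod.mk.injEq, Fin.mk.injEq] at h
    exact Fin.ext h.1
  simpa using Fintype.card_le_of_injective _ this

end CFONAux

open CFONAux in
theorem clawfree_cfon_lower_bound (N : ℕ) (hN : 0 < N) :
    ∃ (n : ℕ) (G : SimpleGraph (Fin n)),
      N ≤ n ∧
      (¬ ∃ (b : Fin n) (S : Finset (Fin n)), S.card = 3 ∧ b ∉ S ∧
        (∀ a ∈ S, G.Adj b a) ∧ (∀ a ∈ S, ∀ a' ∈ S, a ≠ a' → ¬ G.Adj a a')) ∧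
      (∀ v : Fin n, ∃ u, G.Adj v u) ∧
      (∀ (k : ℕ) (c : Fin n → Fin k),
        (∀ v : Fin n, ∃ a : Fin k, ∃! u : Fin n, G.Adj v u ∧ c u = a) →
        Real.logb 2 ((1 + Real.sqrt (1 + 8 * n)) / 2) ≤ k) := by
  classical
  set m : ℕ := N + 2 with hm
  set n : ℕ := Fintype.card (V m) with hn
  set e : V m ≃ Fin n := Fintype.equivFin (V m) with he
  refine ⟨n, ⟨fun x y => (H m).Adj (e.symm x) (e.symm y), ?_, ?_⟩, ?_, ?_, ?_, ?_⟩
  · constructor; rintro x y ⟨h1, h2⟩; exact ⟨h1.symm, h2.imp fun x hx => ⟨hx.2, hx.1⟩⟩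
  · constructor; intro x h; exact (H m).loopless.irrefl _ h
  · exact le_card_V N
  · -- claw-free
    rintro ⟨b, S, hS3, hbS, hadj, hnon⟩
    obtain ⟨x, y, z, hxy, hxz, hyz, rfl⟩ := Finset.card_eq_three.mp hS3
    have hx : x ∈ ({x, y, z} : Finset (Fin n)) := by simp
    have hy : y ∈ ({x, y, z} : Finset (Fin n)) := by simp
    have hz : z ∈ ({x, y, z} : Finset (Fin n)) := by simp
    have h12 : e.symm x ≠ e.symm y := fun h => hxy (e.symm.injective h)
    have h13 : e.symm x ≠ e.symm z := fun h => hxz (e.symm.injective h)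
    have h23 : e.symm y ≠ e.symm z := fun h => hyz (e.symm.injective h)
    rcases clawfree h12 h13 h23 (hadj x hx) (hadj y hy) (hadj z hz) with h | h | h
    · exact hnon x hx y hy hxy h
    · exact hnon x hx z hz hxz h
    · exact hnon y hy z hz hyz h
  · -- no isolated vertices
    intro v
    obtain ⟨⟨⟨a, b⟩, hab⟩, hp⟩ : ∃ p : V m, e.symm v = p := ⟨e.symm v, rfl⟩
    have hcard : 1 < ((Finset.univ : Finset (Fin m)).erase a).card := by
      rw [Finset.card_erase_of_mem (Finset.mem_univ a)]
      simp [hm]; omega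
    obtain ⟨r, hr, hrb⟩ := Finset.exists_mem_ne hcard b
    have hra : r ≠ a := Finset.ne_of_mem_erase hr
    have hba : b ≠ a := (hab.ne).symm
    obtain ⟨w, hw1, hw2⟩ : ∃ w : V m, touch b w ∧ w.1.1 ≠ a := by
      rcases lt_or_gt_of_ne hrb with h | h
      · exact ⟨⟨(r, b), h⟩, Or.inr rfl, hra⟩
      · exact ⟨⟨(b, r), h⟩, Or.inl rfl, hba⟩
    have hwp : w ≠ ⟨(a, b), hab⟩ := by
      intro h; exact hw2 (by rw [h])
    refine ⟨e w, Ne.symm ?_, b, ?_, ?_⟩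
    · rw [hp, Equiv.symm_apply_apply]; exact hwp
    · rw [hp]; exact Or.inr rfl
    · rw [Equiv.symm_apply_apply]; exact hw1
  · -- the lower bound
    intro k c hc
    set c' : V m → Fin k := fun v => c (e v) with hc'
    have hc'' : ∀ v : V m, ∃ a : Fin k, ∃! u : V m, (H m).Adj v u ∧ c' u = a := by
      intro v
      obtain ⟨a, u, ⟨hadj, hcu⟩, huniq⟩ := hc (e v)
      refine ⟨a, e.symm u, ⟨?_, ?_⟩, ?_⟩
      · simpa using hadj
      · simpa [hc'] using hcu
      · rintro w ⟨hw1, hw2⟩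
        have := huniq (e w) ⟨by simpa using hw1, by simpa [hc'] using hw2⟩
        rw [← this, Equiv.symm_apply_apply]
    have hm2k : m ≤ 2 ^ k := by
      have h1 := Fintype.card_le_of_injective _ (f_inj c' hc'')
      simpa using h1
    have hn2 : 2 * n ≤ (N + 2) * (N + 1) := by
      have h1 : n ≤ m.choose 2 := card_V_le m
      have h2 : m.choose 2 = m * (m - 1) / 2 := Nat.choose_two_right m
      have h3 : m * (m - 1) = (N + 2) * (N + 1) := by simp [hm]
      omega
    have hs : Real.sqrt (1 + 8 * n) ≤ (2 * N + 3 : ℝ) := by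
      rw [show ((2 * N + 3 : ℝ)) = Real.sqrt ((2 * N + 3) ^ 2) from
        (Real.sqrt_sq (by positivity)).symm]
      apply Real.sqrt_le_sqrt
      have : (2 * n : ℝ) ≤ (N + 2) * (N + 1) := by exact_mod_cast hn2
      nlinarith
    have hx : (0 : ℝ) < (1 + Real.sqrt (1 + 8 * n)) / 2 := by positivity
    rw [Real.logb_le_iff_le_rpow (by norm_num) hx, Real.rpow_natCast]
    have hcast : ((m : ℕ) : ℝ) ≤ ((2 ^ k : ℕ) : ℝ) := by exact_mod_cast hm2k
    push_cast [hm] at hcast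
    linarith
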